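/- Consider the coframe on the 7-dimensional Lie group B^{x^8} given by Equation (8int): φ_0 = a^{-1}da, φ_{-2} = a^4 db, ω^4 = a^8 dξ^4, ω^2 = a^{12}(dξ^2 - 2b dξ^4), ω^0 = a^{16}(dξ^0 - 4b dξ^2 + 4b² dξ^4), ω^{-2} = a^{20}(dξ^{-2} - 6b dξ^0 + 12b² dξ^2 - 8b³ dξ^4 - 322560 ξ^4 dξ^2), and ω^{-4} as given. These 1-forms satisfy the reduced structure equations: dω^{-4} = 24 φ_0∧ω^{-4} - 8 φ_{-2}∧ω^{-2} + 645120 ω^0∧ω^4, dω^{-2} = 20 φ_0∧ω^{-2} - 6 φ_{-2}∧ω^0 + 322560 ω^2∧ω^4, dω^0 = 16 φ_0∧ω^0 - 4 φ_{-2}∧ω^2, dω^2 = 12 φ_0∧ω^2 - 2 φ_{-2}∧ω^4, dω^4 = 8 φ_0∧ω^4, dφ_0 = 0, dφ_{-2} = 4 φ_0∧φ_{-2}. -/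

import Mathlib

noncomputable section

/-- The 7-dimensional space with coordinates (ξ⁻⁴, ξ⁻², ξ⁰, ξ², ξ⁴, a, b),
indexed 0,…,6. -/
abbrev E7 := Fin 7 → ℝ

/-- The coordinate differential dx_i. -/
def dx (i : Fin 7) : E7 →L[ℝ] ℝ := ContinuousLinearMap.proj i

/-- φ₀ = a⁻¹ da. -/
def φ0 : E7 → E7 →L[ℝ] ℝ := fun x => (x 5)⁻¹ • dx 5

/-- φ₋₂ = a⁴ db. -/
def φm : E7 → E7 →L[ℝ] ℝ := fun x => (x 5) ^ 4 • dx 6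

/-- ω⁴ = a⁸ dξ⁴. -/
def ω4 : E7 → E7 →L[ℝ] ℝ := fun x => (x 5) ^ 8 • dx 4

/-- ω² = a¹²(dξ² - 2b dξ⁴). -/
def ω2 : E7 → E7 →L[ℝ] ℝ := fun x => (x 5) ^ 12 • (dx 3 - (2 * x 6) • dx 4)

/-- ω⁰ = a¹⁶(dξ⁰ - 4b dξ² + 4b² dξ⁴). -/
def ω0 : E7 → E7 →L[ℝ] ℝ := fun x =>
  (x 5) ^ 16 • (dx 2 - (4 * x 6) • dx 3 + (4 * (x 6) ^ 2) • dx 4)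

/-- ω⁻² = a²⁰(dξ⁻² - 6b dξ⁰ + 12b² dξ² - 8b³ dξ⁴ - 322560 ξ⁴ dξ²). -/
def ωm2 : E7 → E7 →L[ℝ] ℝ := fun x =>
  (x 5) ^ 20 • (dx 1 - (6 * x 6) • dx 2 + (12 * (x 6) ^ 2) • dx 3
    - (8 * (x 6) ^ 3) • dx 4 - (322560 * x 4) • dx 3)

/-- ω⁻⁴ = a²⁴(dξ⁻⁴ - 8b dξ⁻² + 24b² dξ⁰ - 32b³ dξ² + 16b⁴ dξ⁴
           + 8·322560·ξ⁴b dξ² - 2·322560·ξ⁴ dξ⁰). -/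
def ωm4 : E7 → E7 →L[ℝ] ℝ := fun x =>
  (x 5) ^ 24 • (dx 0 - (8 * x 6) • dx 1 + (24 * (x 6) ^ 2) • dx 2
    - (32 * (x 6) ^ 3) • dx 3 + (16 * (x 6) ^ 4) • dx 4
    + (8 * 322560 * x 4 * x 6) • dx 3 - (2 * 322560 * x 4) • dx 2)

/-- Exterior derivative of a 1-form on E7 (constant vector fields). -/
def d1 (α : E7 → E7 →L[ℝ] ℝ) : E7 → E7 → E7 → ℝ := fun x u v =>
  fderiv ℝ α x u v - fderiv ℝ α x v u

/-- Wedge product of two scalar 1-forms. -/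
def wdg (α β : E7 → E7 →L[ℝ] ℝ) : E7 → E7 → E7 → ℝ := fun x u v =>
  α x u * β x v - α x v * β x u

set_option maxHeartbeats 4000000 in
/-- the coframe of Equation (8int) on the Lie group B^{x⁸}
satisfies the reduced structure equations (eqn:x8-red):
dω⁻⁴ = 24φ₀∧ω⁻⁴ - 8φ₋₂∧ω⁻² + 2·322560 ω⁰∧ω⁴,
dω⁻² = 20φ₀∧ω⁻² - 6φ₋₂∧ω⁰ + 322560 ω²∧ω⁴,
dω⁰ = 16φ₀∧ω⁰ - 4φ₋₂∧ω², dω² = 12φ₀∧ω² - 2φ₋₂∧ω⁴, dω⁴ = 8φ₀∧ω⁴,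
dφ₀ = 0, dφ₋₂ = 4φ₀∧φ₋₂. -/
theorem x8_reduced_structure_equations :
    ∀ x : E7, 0 < x 5 → ∀ u v : E7,
      d1 ωm4 x u v = 24 * wdg φ0 ωm4 x u v - 8 * wdg φm ωm2 x u v
          + 645120 * wdg ω0 ω4 x u v ∧
      d1 ωm2 x u v = 20 * wdg φ0 ωm2 x u v - 6 * wdg φm ω0 x u v
          + 322560 * wdg ω2 ω4 x u v ∧
      d1 ω0 x u v = 16 * wdg φ0 ω0 x u v - 4 * wdg φm ω2 x u v ∧
      d1 ω2 x u v = 12 * wdg φ0 ω2 x u v - 2 * wdg φm ω4 x u v ∧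
      d1 ω4 x u v = 8 * wdg φ0 ω4 x u v ∧
      d1 φ0 x u v = 0 ∧
      d1 φm x u v = 4 * wdg φ0 φm x u v := by
  intro x hx u v
  have hne : x 5 ≠ 0 := ne_of_gt hx
  have hx4 : HasFDerivAt (fun y : E7 => y 4) (dx 4) x := (dx 4).hasFDerivAt
  have hx5 : HasFDerivAt (fun y : E7 => y 5) (dx 5) x := (dx 5).hasFDerivAt
  have hx6 : HasFDerivAt (fun y : E7 => y 6) (dx 6) x := (dx 6).hasFDerivAt
  have hp5 : ∀ n : ℕ, HasFDerivAt (fun y : E7 => (y 5) ^ n)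
      (((n : ℝ) * x 5 ^ (n - 1)) • dx 5) x :=
    fun n => (hasDerivAt_pow n (x 5)).comp_hasFDerivAt x hx5
  have hp6 : ∀ n : ℕ, HasFDerivAt (fun y : E7 => (y 6) ^ n)
      (((n : ℝ) * x 6 ^ (n - 1)) • dx 6) x :=
    fun n => (hasDerivAt_pow n (x 6)).comp_hasFDerivAt x hx6
  have hφ0 : HasFDerivAt φ0 _ x := ((hasFDerivAt_inv hne).comp x hx5).smul_const (dx 5)
  have hφm : HasFDerivAt φm _ x := (hp5 4).smul_const (dx 6)
  have hω4 : HasFDerivAt ω4 _ x := (hp5 8).smul_const (dx 4)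
  have hω2 : HasFDerivAt ω2 _ x :=
    (hp5 12).smul ((hasFDerivAt_const (dx 3) x).sub ((hx6.const_mul 2).smul_const (dx 4)))
  have hω0 : HasFDerivAt ω0 _ x :=
    (hp5 16).smul (((hasFDerivAt_const (dx 2) x).sub
      ((hx6.const_mul 4).smul_const (dx 3))).add
      (((hp6 2).const_mul 4).smul_const (dx 4)))
  have hωm2 : HasFDerivAt ωm2 _ x :=
    (hp5 20).smul (((((hasFDerivAt_const (dx 1) x).sub
      ((hx6.const_mul 6).smul_const (dx 2))).add
      (((hp6 2).const_mul 12).smul_const (dx 3))).sub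
      (((hp6 3).const_mul 8).smul_const (dx 4))).sub
      ((hx4.const_mul 322560).smul_const (dx 3)))
  have hωm4 : HasFDerivAt ωm4 _ x :=
    (hp5 24).smul (((((((hasFDerivAt_const (dx 0) x).sub
      ((hx6.const_mul 8).smul_const (dx 1))).add
      (((hp6 2).const_mul 24).smul_const (dx 2))).sub
      (((hp6 3).const_mul 32).smul_const (dx 3))).add
      (((hp6 4).const_mul 16).smul_const (dx 4))).add
      (((hx4.const_mul (8 * 322560)).mul hx6).smul_const (dx 3))).sub
      ((hx4.const_mul (2 * 322560)).smul_const (dx 2)))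
  refine ⟨?_, ?_, ?_, ?_, ?_, ?_, ?_⟩ <;>
  · simp only [d1, wdg, hφ0.fderiv, hφm.fderiv, hω4.fderiv, hω2.fderiv, hω0.fderiv,
      hωm2.fderiv, hωm4.fderiv, φ0, φm, ω4, ω2, ω0, ωm2, ωm4, dx,
      ContinuousLinearMap.add_apply, ContinuousLinearMap.sub_apply,
      ContinuousLinearMap.smul_apply, ContinuousLinearMap.smulRight_apply,
      ContinuousLinearMap.neg_apply, ContinuousLinearMap.zero_apply,
      ContinuousLinearMap.proj_apply, ContinuousLinearMap.comp_apply,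
      ContinuousLinearMap.smulRight_apply, ContinuousLinearMap.one_apply,
      smul_eq_mul, neg_mul, Pi.smul_apply, ContinuousLinearMap.toSpanSingleton_apply]
    field_simp
    ring
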